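/- Let (x₁,y₁), (x₂,y₂), (x₃,y₃) ∈ ℝ² and Δ > 0 with x₁ < x₂. Let D := √((x₂−x₁)² + (y₂−y₁)²) and assume D > 2Δ. Set θ := arctan((y₂−y₁)/(x₂−x₁)) and α := arcsin(2Δ/D), and assume θ + α < π/2 and θ − α > −π/2. Suppose that either (Upper) y₃ > tan θ·(x₃−x₁) + y₁ + 2Δ/cos θ, and y₃ > tan(θ+α)·(x₃−x₁) + y₁, and y₃ > tan(θ−α)·(x₃−x₂) + y₂; or (Lower) y₃ < tan θ·(x₃−x₁) + y₁ − 2Δ/cos θ, and y₃ < tan(θ+α)·(x₃−x₂) + y₂, and y₃ < tan(θ−α)·(x₃−x₁) + y₁. Then there exist no point a ∈ ℝ² and no direction v ∈ ℝ², v ≠ 0, such that for each i ∈ {1,2,3} there is sᵢ ∈ ℝ with ‖a + sᵢ·v − (xᵢ,yᵢ)‖ ≤ Δ; i.e., no line of the plane is within distance Δ of all three points simultaneously. -/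

import Mathlib

open Real

set_option maxHeartbeats 1000000


lemma chord_lemma (s s₀ s₁ c c₀ c₁ : ℝ) (hc : 0 ≤ c) (hc0 : 0 ≤ c₀) (hc1 : 0 ≤ c₁)
    (e : c ^ 2 = 1 - s ^ 2) (e0 : c₀ ^ 2 = 1 - s₀ ^ 2) (e1 : c₁ ^ 2 = 1 - s₁ ^ 2)
    (h0 : s₀ ≤ s) (h1 : s ≤ s₁) :
    (s₁ - s) * c₀ + (s - s₀) * c₁ ≤ (s₁ - s₀) * c := by
  have hs0 : s₀ ^ 2 ≤ 1 := by nlinarith [sq_nonneg c₀]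
  have hs1 : s₁ ^ 2 ≤ 1 := by nlinarith [sq_nonneg c₁]
  have h3 : 0 ≤ 1 - s₀ * s₁ := by nlinarith
  have e01 : (c₀ * c₁) ^ 2 = (1 - s₀ ^ 2) * (1 - s₁ ^ 2) := by rw [mul_pow, e0, e1]
  have hcc : c₀ * c₁ ≤ 1 - s₀ * s₁ := by
    nlinarith [e01, h3, mul_nonneg hc0 hc1, sq_nonneg (s₀ - s₁)]
  have hR : 0 ≤ (s₁ - s) * c₀ + (s - s₀) * c₁ :=
    add_nonneg (mul_nonneg (by linarith) hc0) (mul_nonneg (by linarith) hc1)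
  have hL : 0 ≤ (s₁ - s₀) * c := mul_nonneg (by linarith) hc
  have hprod : 0 ≤ (s₁ - s) * ((s - s₀) * (1 - s₀ * s₁ - c₀ * c₁)) :=
    mul_nonneg (by linarith) (mul_nonneg (by linarith) (by linarith))
  have hid : ((s₁ - s₀) * c) ^ 2 - ((s₁ - s) * c₀ + (s - s₀) * c₁) ^ 2
      = 2 * ((s₁ - s) * ((s - s₀) * (1 - s₀ * s₁ - c₀ * c₁))) := by
    linear_combination (s₁ - s₀) ^ 2 * e - (s₁ - s) ^ 2 * e0 - (s - s₀) ^ 2 * e1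
  have hsq : ((s₁ - s) * c₀ + (s - s₀) * c₁) ^ 2 ≤ ((s₁ - s₀) * c) ^ 2 := by linarith
  nlinarith [hsq, hR, hL]

lemma core_aux (Δ D S C p q c₁ c₂ : ℝ) (hΔ : 0 < Δ) (hD : 2 * Δ < D)
    (hS : S = 2 * Δ / D) (hCpos : 0 < C) (hC2 : C ^ 2 + S ^ 2 = 1)
    (hq : 2 * Δ < q) (hB : S * p < C * q) (hC3 : 2 * Δ < C * q + S * p)
    (hunit : c₁ ^ 2 + c₂ ^ 2 = 1) (hc1 : c₁ ^ 2 ≤ S ^ 2) (hc2 : 0 ≤ c₂)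
    (h2 : (c₁ * p + c₂ * q) ^ 2 ≤ (2 * Δ) ^ 2)
    (h3 : (c₁ * (p - D) + c₂ * q) ^ 2 ≤ (2 * Δ) ^ 2) : False := by
  have hDpos : 0 < D := by linarith
  have hSpos : 0 < S := by rw [hS]; positivity
  have hSD : S * D = 2 * Δ := by rw [hS]; field_simp
  have hc1S : c₁ ≤ S := by nlinarith
  have hc1S' : -S ≤ c₁ := by nlinarith
  rcases lt_trichotomy c₁ 0 with hc | hc | hc
  · -- c₁ < 0 : pair (2,3), chord from -S to 0
    have hch := chord_lemma c₁ (-S) 0 c₂ C 1 hc2 hCpos.le zero_le_one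
      (by linear_combination hunit) (by linear_combination hC2) (by norm_num) hc1S' hc.le
    have hend : 2 * Δ < C * q - S * (p - D) := by
      have : C * q - S * (p - D) = C * q - S * p + S * D := by ring
      linarith [hB, hSD]
    have t1 : 0 < (-c₁) * (C * q - S * (p - D) - 2 * Δ) :=
      mul_pos (by linarith) (by linarith)
    have t2 : 0 ≤ (c₁ + S) * (q - 2 * Δ) := mul_nonneg (by linarith) (by linarith)
    have t3 : 0 ≤ (S * c₂ - ((-c₁) * C + (c₁ + S))) * q :=
      mul_nonneg (by linarith [hch]) (by linarith)
    have hkey' : 2 * Δ * S < (c₁ * (p - D) + c₂ * q) * S := by linarith [t1, t2, t3]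
    have hkey : 2 * Δ < c₁ * (p - D) + c₂ * q := lt_of_mul_lt_mul_right hkey' hSpos.le
    nlinarith [h3, hkey, hΔ]
  · -- c₁ = 0
    subst hc
    have hz : (c₂ - 1) * (c₂ + 1) = 0 := by linear_combination hunit
    rcases mul_eq_zero.mp hz with h | h
    · have : c₂ = 1 := by linarith
      rw [this] at h2
      nlinarith [h2, hq, hΔ]
    · have : c₂ = -1 := by linarith
      nlinarith [hc2]
  · -- 0 < c₁ : pair (1,2)... chord from 0 to S
    have hch := chord_lemma c₁ 0 S c₂ 1 C hc2 zero_le_one hCpos.le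
      (by linear_combination hunit) (by norm_num) (by linear_combination hC2) hc.le hc1S
    have t1 : 0 < c₁ * (C * q + S * p - 2 * Δ) := mul_pos hc (by linarith)
    have t2 : 0 ≤ (S - c₁) * (q - 2 * Δ) := mul_nonneg (by linarith) (by linarith)
    have t3 : 0 ≤ (S * c₂ - ((S - c₁) + c₁ * C)) * q :=
      mul_nonneg (by linarith [hch]) (by linarith)
    have hkey' : 2 * Δ * S < (c₁ * p + c₂ * q) * S := by linarith [t1, t2, t3]
    have hkey : 2 * Δ < c₁ * p + c₂ * q := lt_of_mul_lt_mul_right hkey' hSpos.le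
    nlinarith [h2, hkey, hΔ]

lemma core (Δ D S C p q c₁ c₂ : ℝ) (hΔ : 0 < Δ) (hD : 2 * Δ < D)
    (hS : S = 2 * Δ / D) (hCpos : 0 < C) (hC2 : C ^ 2 + S ^ 2 = 1)
    (hq : 2 * Δ < q) (hB : S * p < C * q) (hC3 : 2 * Δ < C * q + S * p)
    (hunit : c₁ ^ 2 + c₂ ^ 2 = 1) (hc1 : c₁ ^ 2 ≤ S ^ 2)
    (h2 : (c₁ * p + c₂ * q) ^ 2 ≤ (2 * Δ) ^ 2)
    (h3 : (c₁ * (p - D) + c₂ * q) ^ 2 ≤ (2 * Δ) ^ 2) : False := by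
  rcases le_or_gt 0 c₂ with h | h
  · exact core_aux Δ D S C p q c₁ c₂ hΔ hD hS hCpos hC2 hq hB hC3 hunit hc1 h h2 h3
  · refine core_aux Δ D S C p q (-c₁) (-c₂) hΔ hD hS hCpos hC2 hq hB hC3
      (by linear_combination hunit) (by linarith [hc1]) (by linarith) ?_ ?_
    · calc ((-c₁) * p + (-c₂) * q) ^ 2 = (c₁ * p + c₂ * q) ^ 2 := by ring
        _ ≤ (2 * Δ) ^ 2 := h2
    · calc ((-c₁) * (p - D) + (-c₂) * q) ^ 2 = (c₁ * (p - D) + c₂ * q) ^ 2 := by ring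
        _ ≤ (2 * Δ) ^ 2 := h3

lemma upper_case (x₁ y₁ x₂ y₂ x₃ y₃ Δ D θ α e f : ℝ) (hΔ : 0 < Δ) (hx : x₁ < x₂)
    (hD : D = Real.sqrt ((x₂ - x₁) ^ 2 + (y₂ - y₁) ^ 2)) (hD2 : D > 2 * Δ)
    (hθ : θ = Real.arctan ((y₂ - y₁) / (x₂ - x₁)))
    (hα : α = Real.arcsin (2 * Δ / D))
    (hangle₁ : θ + α < π / 2) (hangle₂ : θ - α > -(π / 2))
    (hA : y₃ > Real.tan θ * (x₃ - x₁) + y₁ + 2 * Δ / Real.cos θ)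
    (hB : y₃ > Real.tan (θ + α) * (x₃ - x₁) + y₁)
    (hC : y₃ > Real.tan (θ - α) * (x₃ - x₂) + y₂)
    (hef : e ^ 2 + f ^ 2 ≠ 0)
    (cov12 : (e * (y₂ - y₁) - f * (x₂ - x₁)) ^ 2 ≤ 4 * (e ^ 2 + f ^ 2) * Δ ^ 2)
    (cov13 : (e * (y₃ - y₁) - f * (x₃ - x₁)) ^ 2 ≤ 4 * (e ^ 2 + f ^ 2) * Δ ^ 2)
    (cov23 : (e * (y₃ - y₂) - f * (x₃ - x₂)) ^ 2 ≤ 4 * (e ^ 2 + f ^ 2) * Δ ^ 2) : False := by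
  have hdx : 0 < x₂ - x₁ := by linarith
  have hdxne : x₂ - x₁ ≠ 0 := ne_of_gt hdx
  have hDpos : 0 < D := by linarith
  have hDne : D ≠ 0 := ne_of_gt hDpos
  have hDD : (x₂ - x₁) ^ 2 + (y₂ - y₁) ^ 2 = D ^ 2 := by
    rw [hD]; exact (Real.sq_sqrt (by positivity)).symm
  have hcos : Real.cos θ = (x₂ - x₁) / D := by
    rw [hθ, Real.cos_arctan]
    have h1 : 1 + ((y₂ - y₁) / (x₂ - x₁)) ^ 2 = (D / (x₂ - x₁)) ^ 2 := by
      field_simp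
      linarith [hDD]
    rw [h1, Real.sqrt_sq (by positivity : (0:ℝ) ≤ D / (x₂ - x₁)), one_div_div]
  have hcospos : 0 < Real.cos θ := hcos ▸ div_pos hdx hDpos
  have htan : Real.tan θ = (y₂ - y₁) / (x₂ - x₁) := by rw [hθ]; exact Real.tan_arctan _
  have hsin : Real.sin θ = (y₂ - y₁) / D := by
    have ht := Real.tan_mul_cos (ne_of_gt hcospos)
    rw [htan, hcos] at ht
    rw [← ht]; field_simp
  have hsinα : Real.sin α = 2 * Δ / D := by
    rw [hα]; exact Real.sin_arcsin (le_trans (by norm_num : (-1:ℝ) ≤ 0) (by positivity)) (by rw [div_le_one hDpos]; linarith)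
  have hSlt1 : 2 * Δ / D < 1 := by rw [div_lt_one hDpos]; linarith
  have hSpos : 0 < 2 * Δ / D := by positivity
  have hcosαpos : 0 < Real.cos α := by
    rw [hα, Real.cos_arcsin]
    apply Real.sqrt_pos.mpr
    nlinarith [hSlt1, hSpos]
  have hC2' : (Real.cos α) ^ 2 + (2 * Δ / D) ^ 2 = 1 := by
    have h := Real.sin_sq_add_cos_sq α
    rw [hsinα] at h
    linarith
  have hθ1 : -(π / 2) < θ := by rw [hθ]; exact Real.neg_pi_div_two_lt_arctan _
  have hθ2 : θ < π / 2 := by rw [hθ]; exact Real.arctan_lt_pi_div_two _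
  have hα0 : 0 ≤ α := by rw [hα]; exact Real.arcsin_nonneg.mpr (by positivity)
  have hcosA1 : 0 < Real.cos (θ + α) :=
    Real.cos_pos_of_mem_Ioo ⟨by linarith, hangle₁⟩
  have hcosA2 : 0 < Real.cos (θ - α) :=
    Real.cos_pos_of_mem_Ioo ⟨hangle₂, by linarith⟩
  -- scalar form of hA
  have hQ : 2 * Δ * D < (x₂ - x₁) * (y₃ - y₁) - (y₂ - y₁) * (x₃ - x₁) := by
    rw [htan, hcos, div_div_eq_mul_div] at hA
    have h2 := mul_lt_mul_of_pos_left hA hdx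
    have e2 : (x₂ - x₁) * ((y₂ - y₁) / (x₂ - x₁) * (x₃ - x₁) + y₁ + 2 * Δ * D / (x₂ - x₁))
        = (y₂ - y₁) * (x₃ - x₁) + (x₂ - x₁) * y₁ + 2 * Δ * D := by field_simp
    rw [e2] at h2
    linarith [h2]
  -- scalar form of hB
  have hBc : 0 < Real.cos (θ + α) * (y₃ - y₁) - Real.sin (θ + α) * (x₃ - x₁) := by
    have e1 : Real.cos (θ + α) * (Real.tan (θ + α) * (x₃ - x₁) + y₁)
        = Real.sin (θ + α) * (x₃ - x₁) + Real.cos (θ + α) * y₁ := by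
      rw [← Real.tan_mul_cos (ne_of_gt hcosA1)]; ring
    have h2 := mul_lt_mul_of_pos_left hB hcosA1
    rw [e1] at h2
    linarith [h2]
  have key1 : Real.cos α * ((x₂ - x₁) * (y₃ - y₁) - (y₂ - y₁) * (x₃ - x₁))
      - 2 * Δ / D * ((x₂ - x₁) * (x₃ - x₁) + (y₂ - y₁) * (y₃ - y₁))
      = D * (Real.cos (θ + α) * (y₃ - y₁) - Real.sin (θ + α) * (x₃ - x₁)) := by
    rw [Real.cos_add, Real.sin_add, hsin, hcos, hsinα]
    field_simp
    ring
  have hBQ : 2 * Δ / D * ((x₂ - x₁) * (x₃ - x₁) + (y₂ - y₁) * (y₃ - y₁))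
      < Real.cos α * ((x₂ - x₁) * (y₃ - y₁) - (y₂ - y₁) * (x₃ - x₁)) := by
    linarith [mul_pos hDpos hBc, key1]
  -- scalar form of hC
  have hCc : 0 < Real.cos (θ - α) * (y₃ - y₂) - Real.sin (θ - α) * (x₃ - x₂) := by
    have e1 : Real.cos (θ - α) * (Real.tan (θ - α) * (x₃ - x₂) + y₂)
        = Real.sin (θ - α) * (x₃ - x₂) + Real.cos (θ - α) * y₂ := by
      rw [← Real.tan_mul_cos (ne_of_gt hcosA2)]; ring
    have h2 := mul_lt_mul_of_pos_left hC hcosA2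
    rw [e1] at h2
    linarith [h2]
  have key2 : Real.cos α * ((x₂ - x₁) * (y₃ - y₂) - (y₂ - y₁) * (x₃ - x₂))
      + 2 * Δ / D * ((x₂ - x₁) * (x₃ - x₂) + (y₂ - y₁) * (y₃ - y₂))
      = D * (Real.cos (θ - α) * (y₃ - y₂) - Real.sin (θ - α) * (x₃ - x₂)) := by
    rw [Real.cos_sub, Real.sin_sub, hsin, hcos, hsinα]
    field_simp
    ring
  have eP : 2 * Δ / D * ((x₂ - x₁) * (x₃ - x₂) + (y₂ - y₁) * (y₃ - y₂))
      = 2 * Δ / D * ((x₂ - x₁) * (x₃ - x₁) + (y₂ - y₁) * (y₃ - y₁)) - 2 * Δ * D := by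
    have h1 : (x₂ - x₁) * (x₃ - x₂) + (y₂ - y₁) * (y₃ - y₂)
        = ((x₂ - x₁) * (x₃ - x₁) + (y₂ - y₁) * (y₃ - y₁)) - ((x₂ - x₁) ^ 2 + (y₂ - y₁) ^ 2) := by
      ring
    rw [h1, hDD]
    field_simp
  have hC3' : 2 * Δ * D < Real.cos α * ((x₂ - x₁) * (y₃ - y₁) - (y₂ - y₁) * (x₃ - x₁))
      + 2 * Δ / D * ((x₂ - x₁) * (x₃ - x₁) + (y₂ - y₁) * (y₃ - y₁)) := by
    have eQ : (x₂ - x₁) * (y₃ - y₂) - (y₂ - y₁) * (x₃ - x₂)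
        = (x₂ - x₁) * (y₃ - y₁) - (y₂ - y₁) * (x₃ - x₁) := by ring
    rw [eQ, eP] at key2
    linarith [mul_pos hDpos hCc, key2]
  -- normalization
  have hefpos : 0 < e ^ 2 + f ^ 2 := lt_of_le_of_ne (by positivity) (Ne.symm hef)
  set P := (x₂ - x₁) * (x₃ - x₁) + (y₂ - y₁) * (y₃ - y₁) with hP
  set Q := (x₂ - x₁) * (y₃ - y₁) - (y₂ - y₁) * (x₃ - x₁) with hQd
  set E := e * (y₂ - y₁) - f * (x₂ - x₁) with hE
  set F := e * (x₂ - x₁) + f * (y₂ - y₁) with hF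
  set K := Real.sqrt (e ^ 2 + f ^ 2) * D with hK
  have hKpos : 0 < K := mul_pos (Real.sqrt_pos.mpr hefpos) hDpos
  have hK2 : K ^ 2 = (e ^ 2 + f ^ 2) * D ^ 2 := by
    rw [hK, mul_pow, Real.sq_sqrt hefpos.le]
  have hEF : E ^ 2 + F ^ 2 = K ^ 2 := by
    have h1 : E ^ 2 + F ^ 2 = (e ^ 2 + f ^ 2) * ((x₂ - x₁) ^ 2 + (y₂ - y₁) ^ 2) := by
      rw [hE, hF]; ring
    rw [h1, hDD, ← hK2]
  refine core Δ D (2 * Δ / D) (Real.cos α) (P / D) (Q / D) (E / K) (F / K)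
    hΔ hD2 rfl hcosαpos hC2' ?_ ?_ ?_ ?_ ?_ ?_ ?_
  · exact (lt_div_iff₀ hDpos).mpr (by linarith [hQ])
  · have e1 : 2 * Δ / D * (P / D) = (2 * Δ / D * P) / D := by ring
    have e2 : Real.cos α * (Q / D) = (Real.cos α * Q) / D := by ring
    rw [e1, e2]
    exact (div_lt_div_iff_of_pos_right hDpos).mpr hBQ
  · have e3 : Real.cos α * (Q / D) + 2 * Δ / D * (P / D) = (Real.cos α * Q + 2 * Δ / D * P) / D := by
      ring
    rw [e3, lt_div_iff₀ hDpos]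
    linarith [hC3']
  · have h1 : (E / K) ^ 2 + (F / K) ^ 2 = (E ^ 2 + F ^ 2) / K ^ 2 := by
      rw [div_pow, div_pow, ← add_div]
    rw [h1, hEF, div_self (ne_of_gt (pow_pos hKpos 2))]
  · rw [div_pow, div_pow, div_le_div_iff₀ (by positivity) (by positivity)]
    have hK2' : (2 * Δ) ^ 2 * K ^ 2 = 4 * (e ^ 2 + f ^ 2) * Δ ^ 2 * D ^ 2 := by
      rw [hK2]; ring
    linarith [mul_le_mul_of_nonneg_right cov12 (sq_nonneg D), hK2']
  · have hval : E / K * (P / D) + F / K * (Q / D) = (E * P + F * Q) / (K * D) := by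
      rw [div_mul_div_comm, div_mul_div_comm, ← add_div]
    have hid2 : E * P + F * Q = D ^ 2 * (e * (y₃ - y₁) - f * (x₃ - x₁)) := by
      rw [hE, hF, hP, hQd]
      linear_combination (e * (y₃ - y₁) - f * (x₃ - x₁)) * hDD
    rw [hval, hid2, div_pow, div_le_iff₀ (by positivity : (0:ℝ) < (K * D) ^ 2)]
    have hK2'' : (2 * Δ) ^ 2 * (K * D) ^ 2 = 4 * (e ^ 2 + f ^ 2) * Δ ^ 2 * (D ^ 2) ^ 2 := by
      rw [mul_pow K D, hK2]; ring
    linarith [mul_le_mul_of_nonneg_right cov13 (sq_nonneg (D ^ 2)), hK2'']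
  · have e5 : D ^ 2 / D = D := by rw [sq]; exact mul_div_cancel_right₀ D hDne
    have e4 : P / D - D = (P - D ^ 2) / D := by rw [sub_div, e5]
    have hval3 : E / K * (P / D - D) + F / K * (Q / D) = (E * (P - D ^ 2) + F * Q) / (K * D) := by
      rw [e4, div_mul_div_comm, div_mul_div_comm, ← add_div]
    have hid3 : E * (P - D ^ 2) + F * Q = D ^ 2 * (e * (y₃ - y₂) - f * (x₃ - x₂)) := by
      rw [hE, hF, hP, hQd]
      linear_combination (e * (y₂ - y₁) - f * (x₂ - x₁) + (e * (y₃ - y₂) - f * (x₃ - x₂))) * hDD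
    rw [hval3, hid3, div_pow, div_le_iff₀ (by positivity : (0:ℝ) < (K * D) ^ 2)]
    have hK2'' : (2 * Δ) ^ 2 * (K * D) ^ 2 = 4 * (e ^ 2 + f ^ 2) * Δ ^ 2 * (D ^ 2) ^ 2 := by
      rw [mul_pow K D, hK2]; ring
    linarith [mul_le_mul_of_nonneg_right cov23 (sq_nonneg (D ^ 2)), hK2'']

/-- **Infeasible triples (Proposition 3).** If a third point `(x₃, y₃)` lies strictly above the
upper envelope or strictly below the lower envelope of the region `P̃_{ℓ₁,ℓ₂}(Δ)` determined by
the lines `λ₁,…,λ₆`, then no line of the plane is within distance `Δ` of all three points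
`(x₁,y₁)`, `(x₂,y₂)`, `(x₃,y₃)` simultaneously. -/
theorem infeasible_triple (x₁ y₁ x₂ y₂ x₃ y₃ Δ : ℝ) (hΔ : 0 < Δ) (hx : x₁ < x₂)
    (D : ℝ) (hD : D = Real.sqrt ((x₂ - x₁) ^ 2 + (y₂ - y₁) ^ 2)) (hD2 : D > 2 * Δ)
    (θ α : ℝ) (hθ : θ = Real.arctan ((y₂ - y₁) / (x₂ - x₁)))
    (hα : α = Real.arcsin (2 * Δ / D))
    (hangle₁ : θ + α < π / 2) (hangle₂ : θ - α > -(π / 2))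
    (hcase :
      (y₃ > Real.tan θ * (x₃ - x₁) + y₁ + 2 * Δ / Real.cos θ ∧
        y₃ > Real.tan (θ + α) * (x₃ - x₁) + y₁ ∧
        y₃ > Real.tan (θ - α) * (x₃ - x₂) + y₂) ∨
      (y₃ < Real.tan θ * (x₃ - x₁) + y₁ - 2 * Δ / Real.cos θ ∧
        y₃ < Real.tan (θ + α) * (x₃ - x₂) + y₂ ∧
        y₃ < Real.tan (θ - α) * (x₃ - x₁) + y₁)) :
    ¬ ∃ (a v : EuclideanSpace ℝ (Fin 2)), v ≠ 0 ∧
        (∃ s₁ : ℝ, ‖a + s₁ • v - ((EuclideanSpace.equiv (Fin 2) ℝ).symm ![x₁, y₁])‖ ≤ Δ) ∧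
        (∃ s₂ : ℝ, ‖a + s₂ • v - ((EuclideanSpace.equiv (Fin 2) ℝ).symm ![x₂, y₂])‖ ≤ Δ) ∧
        (∃ s₃ : ℝ, ‖a + s₃ • v - ((EuclideanSpace.equiv (Fin 2) ℝ).symm ![x₃, y₃])‖ ≤ Δ) := by
  rintro ⟨a, v, hv, ⟨t₁, h1⟩, ⟨t₂, h2⟩, ⟨t₃, h3⟩⟩
  -- componentwise form of the distance conditions
  have comp : ∀ (t x y : ℝ), ‖a + t • v - ((EuclideanSpace.equiv (Fin 2) ℝ).symm ![x, y])‖ ≤ Δ →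
      (a 0 + t * v 0 - x) ^ 2 + (a 1 + t * v 1 - y) ^ 2 ≤ Δ ^ 2 := by
    intro t x y h
    rw [EuclideanSpace.norm_eq] at h
    simp only [Fin.sum_univ_two] at h
    have h' : Real.sqrt ((a 0 + t * v 0 - x) ^ 2 + (a 1 + t * v 1 - y) ^ 2) ≤ Δ := by
      convert h using 3 <;> simp <;> ring
    have h2 := Real.sq_sqrt (by positivity : (0:ℝ) ≤ (a 0 + t * v 0 - x) ^ 2 + (a 1 + t * v 1 - y) ^ 2)
    have h3 := Real.sqrt_nonneg ((a 0 + t * v 0 - x) ^ 2 + (a 1 + t * v 1 - y) ^ 2)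
    nlinarith [h', h2, h3]
  have G1 := comp t₁ x₁ y₁ h1
  have G2 := comp t₂ x₂ y₂ h2
  have G3 := comp t₃ x₃ y₃ h3
  have hef : (v 0) ^ 2 + (v 1) ^ 2 ≠ 0 := by
    intro h
    apply hv
    have h0 : (v 0) ^ 2 = 0 := by nlinarith [sq_nonneg (v 0), sq_nonneg (v 1)]
    have h1' : (v 1) ^ 2 = 0 := by nlinarith [sq_nonneg (v 0), sq_nonneg (v 1)]
    ext i
    fin_cases i
    · simpa using (pow_eq_zero_iff two_ne_zero).mp h0
    · simpa using (pow_eq_zero_iff two_ne_zero).mp h1'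
  have hefnn : (0:ℝ) ≤ (v 0) ^ 2 + (v 1) ^ 2 := by positivity
  -- the "signed distance" bounds
  have hr : ∀ (t x y : ℝ), (a 0 + t * v 0 - x) ^ 2 + (a 1 + t * v 1 - y) ^ 2 ≤ Δ ^ 2 →
      (v 0 * (a 1 - y) - v 1 * (a 0 - x)) ^ 2 ≤ ((v 0) ^ 2 + (v 1) ^ 2) * Δ ^ 2 := by
    intro t x y h
    nlinarith [sq_nonneg (v 0 * (a 0 + t * v 0 - x) + v 1 * (a 1 + t * v 1 - y)),
      mul_le_mul_of_nonneg_left h hefnn] -- X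
  have r1 := hr t₁ x₁ y₁ G1
  have r2 := hr t₂ x₂ y₂ G2
  have r3 := hr t₃ x₃ y₃ G3
  have cov12 : (v 0 * (y₂ - y₁) - v 1 * (x₂ - x₁)) ^ 2 ≤ 4 * ((v 0) ^ 2 + (v 1) ^ 2) * Δ ^ 2 := by
    linarith [r1, r2, sq_nonneg ((v 0 * (a 1 - y₁) - v 1 * (a 0 - x₁)) + (v 0 * (a 1 - y₂) - v 1 * (a 0 - x₂)))]
  have cov13 : (v 0 * (y₃ - y₁) - v 1 * (x₃ - x₁)) ^ 2 ≤ 4 * ((v 0) ^ 2 + (v 1) ^ 2) * Δ ^ 2 := by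
    linarith [r1, r3, sq_nonneg ((v 0 * (a 1 - y₁) - v 1 * (a 0 - x₁)) + (v 0 * (a 1 - y₃) - v 1 * (a 0 - x₃)))]
  have cov23 : (v 0 * (y₃ - y₂) - v 1 * (x₃ - x₂)) ^ 2 ≤ 4 * ((v 0) ^ 2 + (v 1) ^ 2) * Δ ^ 2 := by
    linarith [r2, r3, sq_nonneg ((v 0 * (a 1 - y₂) - v 1 * (a 0 - x₂)) + (v 0 * (a 1 - y₃) - v 1 * (a 0 - x₃)))]
  rcases hcase with ⟨l1, l2, l3⟩ | ⟨l1, l2, l3⟩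
  · exact upper_case x₁ y₁ x₂ y₂ x₃ y₃ Δ D θ α (v 0) (v 1) hΔ hx hD hD2 hθ hα hangle₁ hangle₂
      l1 l2 l3 hef cov12 cov13 cov23
  · refine upper_case x₁ (-y₁) x₂ (-y₂) x₃ (-y₃) Δ D (-θ) α (v 0) (-(v 1)) hΔ hx ?_ hD2 ?_ hα
      (by linarith) (by linarith) ?_ ?_ ?_ ?_ ?_ ?_ ?_
    · rw [hD, show (-y₂ - -y₁) ^ 2 = (y₂ - y₁) ^ 2 by ring]
    · rw [hθ, show (-y₂ - -y₁) / (x₂ - x₁) = -((y₂ - y₁) / (x₂ - x₁)) by ring, Real.arctan_neg]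
    · rw [Real.tan_neg, Real.cos_neg]; linarith [l1]
    · rw [show -θ + α = -(θ - α) by ring, Real.tan_neg]; linarith [l3]
    · rw [show -θ - α = -(θ + α) by ring, Real.tan_neg]; linarith [l2]
    · rw [neg_pow]; simpa using hef
    · calc (v 0 * (-y₂ - -y₁) - -(v 1) * (x₂ - x₁)) ^ 2
          = (v 0 * (y₂ - y₁) - v 1 * (x₂ - x₁)) ^ 2 := by ring
        _ ≤ 4 * ((v 0) ^ 2 + (v 1) ^ 2) * Δ ^ 2 := cov12
        _ = 4 * ((v 0) ^ 2 + (-(v 1)) ^ 2) * Δ ^ 2 := by ring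
    · calc (v 0 * (-y₃ - -y₁) - -(v 1) * (x₃ - x₁)) ^ 2
          = (v 0 * (y₃ - y₁) - v 1 * (x₃ - x₁)) ^ 2 := by ring
        _ ≤ 4 * ((v 0) ^ 2 + (v 1) ^ 2) * Δ ^ 2 := cov13
        _ = 4 * ((v 0) ^ 2 + (-(v 1)) ^ 2) * Δ ^ 2 := by ring
    · calc (v 0 * (-y₃ - -y₂) - -(v 1) * (x₃ - x₂)) ^ 2
          = (v 0 * (y₃ - y₂) - v 1 * (x₃ - x₂)) ^ 2 := by ring
        _ ≤ 4 * ((v 0) ^ 2 + (v 1) ^ 2) * Δ ^ 2 := cov23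
        _ = 4 * ((v 0) ^ 2 + (-(v 1)) ^ 2) * Δ ^ 2 := by ring
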